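/- Let G be a group, A = ⊕_{g∈G} A_g a G-graded unital *-algebra over ℂ whose unit fibre A_e is commutative, and χ a positive character of A_e. Then for every g ∈ G and all a, b ∈ A_g with χ(b* b) ≠ 0, setting λ := χ(b* a)/χ(b* b) ∈ ℂ, one has χ((a − λ·b)* (a − λ·b)) = 0. Consequently, the positive semidefinite sesquilinear form (a, b) ↦ χ(a* b) on A_g has rank at most one, i.e. the induced Hilbert space A_g ⊗_{A_e, χ} ℂ is at most one-dimensional. -/

import Mathlib

/-- A `G`-graded unital `⋆`-algebra over `ℂ`: a direct sum decomposition
`A = ⊕_{g ∈ G} A_g` into subspaces with `A_g · A_h ⊆ A_{gh}`, `(A_g)* = A_{g⁻¹}` and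
`1 ∈ A_e`. -/
structure GradedStarAlgebra (G : Type*) [Group G]
    (A : Type*) [Ring A] [Algebra ℂ A] [StarRing A] [StarModule ℂ A] where
  fiber : G → Submodule ℂ A
  mul_mem' : ∀ {g h : G} {a b : A}, a ∈ fiber g → b ∈ fiber h → a * b ∈ fiber (g * h)
  star_mem' : ∀ {g : G} {a : A}, a ∈ fiber g → star a ∈ fiber g⁻¹
  one_mem' : (1 : A) ∈ fiber 1
  decompose' : ∀ a : A, ∃ (F : Finset G) (c : G → A),
    (∀ g : G, c g ∈ fiber g) ∧ a = ∑ g ∈ F, c g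
  independent' : ∀ (F : Finset G) (c : G → A), (∀ g : G, c g ∈ fiber g) →
    ∑ g ∈ F, c g = 0 → ∀ g ∈ F, c g = 0

variable {G : Type*} [Group G]
variable {A : Type*} [Ring A] [Algebra ℂ A] [StarRing A] [StarModule ℂ A]

/-- A positive character of the unit fibre `A_e` of a `G`-graded unital `⋆`-algebra: a unital,
multiplicative, `ℂ`-linear, `⋆`-preserving functional on `A_e` such that `χ (a* a) ≥ 0` for
every `a ∈ A_g` and every `g ∈ G`. -/
structure PosChar (S : GradedStarAlgebra G A) where
  toFun : A → ℂ
  map_one' : toFun 1 = 1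
  map_mul' : ∀ x ∈ S.fiber 1, ∀ y ∈ S.fiber 1, toFun (x * y) = toFun x * toFun y
  map_add' : ∀ x ∈ S.fiber 1, ∀ y ∈ S.fiber 1, toFun (x + y) = toFun x + toFun y
  map_smul' : ∀ (c : ℂ), ∀ x ∈ S.fiber 1, toFun (c • x) = c * toFun x
  map_star' : ∀ x ∈ S.fiber 1, toFun (star x) = starRingEnd ℂ (toFun x)
  pos' : ∀ (g : G), ∀ a ∈ S.fiber g,
    0 ≤ (toFun (star a * a)).re ∧ (toFun (star a * a)).im = 0

namespace PosCharAux

variable {S : GradedStarAlgebra G A} (χ : PosChar S)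

/-- `star x * y ∈ A_e` for `x, y` in the same fibre. -/
lemma memE {g : G} {x y : A} (hx : x ∈ S.fiber g) (hy : y ∈ S.fiber g) :
    star x * y ∈ S.fiber 1 := by
  have := S.mul_mem' (S.star_mem' hx) hy
  rwa [inv_mul_cancel] at this

lemma memG {g : G} {x y : A} (hx : x ∈ S.fiber g) (hy : y ∈ S.fiber 1) :
    x * y ∈ S.fiber g := by
  have := S.mul_mem' hx hy
  rwa [mul_one] at this

lemma memE' {g : G} {x y : A} (hx : x ∈ S.fiber g) (hy : y ∈ S.fiber g) :
    x * star y ∈ S.fiber 1 := by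
  have := S.mul_mem' hx (S.star_mem' hy)
  rwa [mul_inv_cancel] at this

lemma memE1 {x y : A} (hx : x ∈ S.fiber 1) (hy : y ∈ S.fiber 1) :
    x * y ∈ S.fiber 1 := by
  have := S.mul_mem' hx hy
  rwa [mul_one] at this

lemma map_zero : χ.toFun 0 = 0 := by
  have := χ.map_smul' 0 1 S.one_mem'
  simpa using this

lemma map_sub {x y : A} (hx : x ∈ S.fiber 1) (hy : y ∈ S.fiber 1) :
    χ.toFun (x - y) = χ.toFun x - χ.toFun y := by
  have h1 : χ.toFun ((-1 : ℂ) • y) = -χ.toFun y := by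
    rw [χ.map_smul' _ _ hy]; ring
  have h2 : x - y = x + (-1 : ℂ) • y := by
    rw [neg_one_smul, sub_eq_add_neg]
  rw [h2, χ.map_add' x hx _ ((S.fiber 1).smul_mem _ hy), h1, sub_eq_add_neg]

lemma star_mul_star_mul {x y : A} : star (star x * y) = star y * x := by
  rw [star_mul, star_star]

/-- `χ(a* b) = conj (χ(b* a))`. -/
lemma conj_swap {g : G} {a b : A} (ha : a ∈ S.fiber g) (hb : b ∈ S.fiber g) :
    χ.toFun (star a * b) = starRingEnd ℂ (χ.toFun (star b * a)) := by
  have := χ.map_star' _ (memE hb ha)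
  rwa [star_mul_star_mul] at this

lemma real_diag {g : G} {b : A} (hb : b ∈ S.fiber g) :
    starRingEnd ℂ (χ.toFun (star b * b)) = χ.toFun (star b * b) := by
  have := (χ.pos' g b hb).2
  exact Complex.conj_eq_iff_im.mpr this

/-- Expansion of the quadratic form. -/
lemma expand {g : G} {a b : A} (ha : a ∈ S.fiber g) (hb : b ∈ S.fiber g) (l : ℂ) :
    χ.toFun (star (a - l • b) * (a - l • b)) =
      χ.toFun (star a * a) - l * χ.toFun (star a * b)
        - starRingEnd ℂ l * χ.toFun (star b * a)
        + starRingEnd ℂ l * l * χ.toFun (star b * b) := by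
  have hid : star (a - l • b) * (a - l • b) =
      (star a * a - l • (star a * b)) -
        (starRingEnd ℂ l • (star b * a) - (starRingEnd ℂ l * l) • (star b * b)) := by
    rw [star_sub, star_smul]
    simp only [sub_mul, mul_sub, mul_smul_comm, smul_mul_assoc, smul_smul, Complex.star_def]
    module
  have mAA := memE ha ha
  have mAB := memE ha hb
  have mBA := memE hb ha
  have mBB := memE hb hb
  rw [hid, map_sub χ (((S.fiber 1).sub_mem mAA ((S.fiber 1).smul_mem _ mAB)))
      (((S.fiber 1).sub_mem ((S.fiber 1).smul_mem _ mBA) ((S.fiber 1).smul_mem _ mBB))),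
    map_sub χ mAA ((S.fiber 1).smul_mem _ mAB),
    map_sub χ ((S.fiber 1).smul_mem _ mBA) ((S.fiber 1).smul_mem _ mBB),
    χ.map_smul' _ _ mAB, χ.map_smul' _ _ mBA, χ.map_smul' _ _ mBB]
  ring

/-- The key rank-one identity: all `2 × 2` Gram determinants of the form vanish. -/
lemma gram (hcomm : ∀ x ∈ S.fiber 1, ∀ y ∈ S.fiber 1, x * y = y * x)
    {g : G} {a b : A} (ha : a ∈ S.fiber g) (hb : b ∈ S.fiber g) :
    χ.toFun (star a * a) * χ.toFun (star b * b) =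
      χ.toFun (star a * b) * χ.toFun (star b * a) := by
  have hab : χ.toFun (star a * b) = starRingEnd ℂ (χ.toFun (star b * a)) :=
    conj_swap χ ha hb
  by_cases hβ : χ.toFun (star b * b) = 0
  · -- degenerate case: Cauchy–Schwarz forces `χ (b* a) = 0`
    have hp : χ.toFun (star b * a) = 0 := by
      by_contra hp
      have hns : 0 < Complex.normSq (χ.toFun (star b * a)) := Complex.normSq_pos.mpr hp
      set p := χ.toFun (star b * a) with hpdef
      set t : ℝ := ((χ.toFun (star a * a)).re + 1) / (2 * Complex.normSq p) with htdef
      have hmem : a - ((t : ℂ) * p) • b ∈ S.fiber g :=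
        (S.fiber g).sub_mem ha ((S.fiber g).smul_mem _ hb)
      have hv := expand χ ha hb ((t : ℂ) * p)
      have hconj : starRingEnd ℂ ((t : ℂ) * p) = (t : ℂ) * starRingEnd ℂ p := by
        rw [map_mul, Complex.conj_ofReal]
      rw [hβ, hconj, hab, ← hpdef] at hv
      have hv2 : χ.toFun (star (a - ((t : ℂ) * p) • b) * (a - ((t : ℂ) * p) • b)) =
          χ.toFun (star a * a) - 2 * (t : ℂ) * (Complex.normSq p : ℂ) := by
        have h1 : p * starRingEnd ℂ p = (Complex.normSq p : ℂ) := Complex.mul_conj p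
        have h2 : starRingEnd ℂ p * p = (Complex.normSq p : ℂ) := by rw [mul_comm]; exact h1
        linear_combination hv - (t : ℂ) * h1 - (t : ℂ) * h2
      have hpos := (χ.pos' g _ hmem).1
      rw [hv2] at hpos
      have hre : (χ.toFun (star a * a) - 2 * (t : ℂ) * (Complex.normSq p : ℂ)).re =
          (χ.toFun (star a * a)).re - 2 * t * Complex.normSq p := by
        simp
      rw [hre] at hpos
      have ht : 2 * t * Complex.normSq p = (χ.toFun (star a * a)).re + 1 := by
        rw [htdef]; field_simp
      rw [ht] at hpos
      linarith
    rw [hβ, hp, mul_zero, mul_zero]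
  · -- nondegenerate case: use commutativity of the unit fibre
    set z : A := a * (star b * b) - b * (star b * a) with hzdef
    have hz : z ∈ S.fiber g :=
      (S.fiber g).sub_mem (memG ha (memE hb hb)) (memG hb (memE hb ha))
    have hzb : z * star b = 0 := by
      have h1 : (a * (star b * b) - b * (star b * a)) * star b =
          (a * star b) * (b * star b) - (b * star b) * (a * star b) := by noncomm_ring
      rw [hzdef, h1, hcomm _ (memE' ha hb) _ (memE' hb hb), sub_self]
    have hbz : star b * z = 0 := by
      have h1 : star b * (a * (star b * b) - b * (star b * a)) =
          (star b * a) * (star b * b) - (star b * b) * (star b * a) := by noncomm_ring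
      rw [hzdef, h1, hcomm _ (memE hb ha) _ (memE hb hb), sub_self]
    have hstarz : star z = (star b * b) * star a - (star a * b) * star b := by
      rw [hzdef, star_sub, star_mul, star_mul, star_mul, star_star, star_mul, star_star]
    have hzz : star z * z = (star b * b) * (star a * z) := by
      rw [hstarz, sub_mul, mul_assoc (star b * b) (star a) z,
        mul_assoc (star a * b) (star b) z, hbz, mul_zero, sub_zero]
    have hzz0 : star z * z = 0 := by
      rw [hzz, hcomm _ (memE hb hb) _ (memE ha hz)]
      have h1 : (star a * z) * (star b * b) = star a * ((z * star b) * b) := by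
        noncomm_ring
      rw [h1, hzb, zero_mul, mul_zero]
    have haz : χ.toFun (star a * z) =
        χ.toFun (star a * a) * χ.toFun (star b * b) -
          χ.toFun (star a * b) * χ.toFun (star b * a) := by
      have h1 : star a * z = (star a * a) * (star b * b) - (star a * b) * (star b * a) := by
        rw [hzdef]; noncomm_ring
      rw [h1, map_sub χ (memE1 (memE ha ha) (memE hb hb))
          (memE1 (memE ha hb) (memE hb ha)),
        χ.map_mul' _ (memE ha ha) _ (memE hb hb), χ.map_mul' _ (memE ha hb) _ (memE hb ha)]
    have hfin : χ.toFun (star b * b) * χ.toFun (star a * z) = 0 := by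
      rw [← χ.map_mul' _ (memE hb hb) _ (memE ha hz), ← hzz, hzz0, map_zero χ]
    rcases mul_eq_zero.mp hfin with h | h
    · exact absurd h hβ
    · rw [haz] at h
      exact sub_eq_zero.mp h
end PosCharAux

/-- Let `A` be a `G`-graded unital `⋆`-algebra with commutative unit fibre `A_e` and `χ` a
positive character of `A_e`.  For `a, b ∈ A_g` with `χ (b* b) ≠ 0` and
`λ := χ(b* a)/χ(b* b)`, one has `χ((a - λ b)* (a - λ b)) = 0`.  Consequently the positive
semidefinite sesquilinear form `(a, b) ↦ χ(a* b)` on `A_g` has rank at most one: all of its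
`2 × 2` Gram determinants vanish, so the induced Hilbert space `A_g ⊗_{A_e, χ} ℂ` is at most
one-dimensional. -/
theorem posChar_form_rank_le_one (S : GradedStarAlgebra G A)
    (hcomm : ∀ x ∈ S.fiber 1, ∀ y ∈ S.fiber 1, x * y = y * x)
    (χ : PosChar S) (g : G) :
    (∀ a b : A, a ∈ S.fiber g → b ∈ S.fiber g → χ.toFun (star b * b) ≠ 0 →
      χ.toFun (star (a - (χ.toFun (star b * a) / χ.toFun (star b * b)) • b) *
        (a - (χ.toFun (star b * a) / χ.toFun (star b * b)) • b)) = 0) ∧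
    (∀ a b : A, a ∈ S.fiber g → b ∈ S.fiber g →
      χ.toFun (star a * a) * χ.toFun (star b * b) =
        χ.toFun (star a * b) * χ.toFun (star b * a)) := by
  constructor
  · intro a b ha hb hβ
    have hg := PosCharAux.gram χ hcomm ha hb
    have hab := PosCharAux.conj_swap χ ha hb
    have hβr := PosCharAux.real_diag χ hb
    rw [PosCharAux.expand χ ha hb, map_div₀, hβr, hab]
    field_simp
    linear_combination hg +
      χ.toFun (star b * a) * hab
  · intro a b ha hb
    exact PosCharAux.gram χ hcomm ha hb
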